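/- Let T > 0 and q : [t₀, t₀+T] → ℝ be integrable with q(t) ≤ π²/T² a.e., strict on a set of positive measure. Then the Dirichlet problem u'' + q(t)u = 0, u(t₀) = u(t₀+T) = 0, admits only the trivial solution. -/

import Mathlib

open Real MeasureTheory Set
open Filter

/-- A function nonzero at an interior point where it is continuous cannot be a.e. zero. -/
lemma aux_zero {a b : ℝ} {h : ℝ → ℝ}
    (hae : ∀ᵐ x ∂(volume.restrict (Icc a b)), h x = 0)
    {t : ℝ} (ht : t ∈ Ioo a b) (hc : ContinuousAt h t) : h t = 0 := by
  by_contra hne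
  have hU : h ⁻¹' ({0}ᶜ) ∈ nhds t := hc.preimage_mem_nhds (isOpen_compl_singleton.mem_nhds hne)
  have hV : (h ⁻¹' ({0}ᶜ) ∩ Ioo a b) ∈ nhds t := inter_mem hU (isOpen_Ioo.mem_nhds ht)
  obtain ⟨ε, hε, hball⟩ := Metric.mem_nhds_iff.mp hV
  have hIoo : Ioo (t - ε) (t + ε) ⊆ h ⁻¹' ({0}ᶜ) ∩ Icc a b := by
    rw [← Real.ball_eq_Ioo]
    exact hball.trans (inter_subset_inter_right _ Ioo_subset_Icc_self)
  have hnull : volume.restrict (Icc a b) {x | ¬ h x = 0} = 0 := by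
    rw [ae_iff] at hae; exact hae
  have hle : volume.restrict (Icc a b) (Ioo (t - ε) (t + ε)) ≤ 0 := by
    rw [← hnull]
    refine measure_mono ?_
    intro x hx
    exact (hIoo hx).1
  have : volume.restrict (Icc a b) (Ioo (t - ε) (t + ε)) = volume (Ioo (t - ε) (t + ε)) := by
    rw [Measure.restrict_apply' measurableSet_Icc, inter_eq_self_of_subset_left]
    intro x hx; exact (hIoo hx).2
  rw [this, Real.volume_Ioo] at hle
  simp only [le_zero_iff, ENNReal.ofReal_eq_zero] at hle
  linarith

/-- limit of `u * c / v` at a common zero of `u` and `v`. -/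
lemma aux_tendsto {u v c : ℝ → ℝ} {e du : ℝ}
    (hu : HasDerivAt u du e) (hue : u e = 0)
    (hv : HasDerivAt v (c e) e) (hve : v e = 0) (hce : c e ≠ 0)
    (hcc : ContinuousAt c e) :
    Tendsto (fun s => u s * c s / v s) (nhdsWithin e {e}ᶜ) (nhds du) := by
  have hsu : Tendsto (slope u e) (nhdsWithin e {e}ᶜ) (nhds du) :=
    hasDerivAt_iff_tendsto_slope.mp hu
  have hsv : Tendsto (slope v e) (nhdsWithin e {e}ᶜ) (nhds (c e)) :=
    hasDerivAt_iff_tendsto_slope.mp hv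
  have hccw : Tendsto c (nhdsWithin e {e}ᶜ) (nhds (c e)) :=
    hcc.continuousWithinAt.tendsto
  have h1 : Tendsto (fun s => slope u e s / slope v e s * c s) (nhdsWithin e {e}ᶜ)
      (nhds (du / c e * c e)) := ((hsu.div hsv hce).mul hccw)
  rw [div_mul_cancel₀ _ hce] at h1
  refine h1.congr' ?_
  filter_upwards [self_mem_nhdsWithin] with s hs
  have hse : s - e ≠ 0 := sub_ne_zero.mpr hs
  rw [slope_def_field, slope_def_field, hue, hve, sub_zero, sub_zero]
  rcases eq_or_ne (v s) 0 with hvs | hvs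
  · simp [hvs, div_eq_zero_iff.mpr (Or.inl hvs)]
  · field_simp

/-- If `q ≤ π²/T²` a.e. on `[t₀, t₀+T]`, strictly on a set of positive measure, then the
Dirichlet problem `u'' + q u = 0`, `u(t₀) = u(t₀+T) = 0` admits only the trivial solution. -/
theorem stmt18 (T : ℝ) (hT : 0 < T) (t₀ : ℝ) (q : ℝ → ℝ)
    (hint : IntegrableOn q (Icc t₀ (t₀ + T)) volume)
    (hub : ∀ᵐ t ∂(volume.restrict (Icc t₀ (t₀ + T))), q t ≤ π ^ 2 / T ^ 2)
    (hstrict : 0 < volume {t ∈ Icc t₀ (t₀ + T) | q t < π ^ 2 / T ^ 2})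
    (u : ℝ → ℝ) (hu : ContDiff ℝ 2 u)
    (hode : ∀ t ∈ Icc t₀ (t₀ + T), deriv (deriv u) t + q t * u t = 0)
    (hbc0 : u t₀ = 0) (hbcT : u (t₀ + T) = 0) :
    ∀ t ∈ Icc t₀ (t₀ + T), u t = 0 := by
  set b := t₀ + T with hbdef
  have hab : t₀ ≤ b := by simp [hbdef]; linarith
  have hab' : t₀ < b := by simp [hbdef]; linarith
  set ω : ℝ := π / T with hωdef
  have hω : 0 < ω := div_pos pi_pos hT
  have hω2 : ω ^ 2 = π ^ 2 / T ^ 2 := by rw [hωdef, div_pow]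
  set v : ℝ → ℝ := fun t => Real.sin (ω * (t - t₀)) with hvdef
  set c : ℝ → ℝ := fun t => ω * Real.cos (ω * (t - t₀)) with hcdef
  have hωT : ω * T = π := by rw [hωdef]; exact div_mul_cancel₀ π hT.ne'
  -- derivatives of v and c
  have hv : ∀ t, HasDerivAt v (c t) t := by
    intro t
    have hin : HasDerivAt (fun s : ℝ => ω * (s - t₀)) ω t := by
      simpa using ((hasDerivAt_id t).sub_const t₀).const_mul ω
    have := (Real.hasDerivAt_sin (ω * (t - t₀))).comp t hin
    rw [show c t = Real.cos (ω * (t - t₀)) * ω by simp only [hcdef]; ring]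
    exact this
  have hc : ∀ t, HasDerivAt c (-(ω ^ 2) * v t) t := by
    intro t
    have hin : HasDerivAt (fun s : ℝ => ω * (s - t₀)) ω t := by
      simpa using ((hasDerivAt_id t).sub_const t₀).const_mul ω
    have := ((Real.hasDerivAt_cos (ω * (t - t₀))).comp t hin).const_mul ω
    simpa [hcdef, hvdef] using this.congr_deriv (by ring)
  have hvcont : Continuous v := by
    exact Real.continuous_sin.comp (continuous_const.mul (continuous_id.sub continuous_const))
  have hccont : Continuous c := by
    exact continuous_const.mul (Real.continuous_cos.comp (continuous_const.mul (continuous_id.sub continuous_const)))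
  -- values
  have hva : v t₀ = 0 := by simp [hvdef]
  have hvb : v b = 0 := by simp [hvdef, hbdef, hωT]
  have hca : c t₀ = ω := by simp [hcdef]
  have hcb : c b = -ω := by simp [hcdef, hbdef, hωT]
  have hvpos : ∀ t ∈ Ioo t₀ b, 0 < v t := by
    intro t ht
    refine Real.sin_pos_of_pos_of_lt_pi ?_ ?_
    · exact mul_pos hω (by linarith [ht.1])
    · have : t - t₀ < T := by have := ht.2; simp [hbdef] at this ⊢; linarith
      calc ω * (t - t₀) < ω * T := by apply mul_lt_mul_of_pos_left this hω
        _ = π := hωT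
  -- smoothness of u
  have hu' : ContDiff ℝ ((1 : WithTop ℕ∞) + 1) u := hu.of_le (by norm_num)
  have hu1 : ∀ t, HasDerivAt u (deriv u t) t :=
    fun t => ((hu.differentiable (by norm_num)) t).hasDerivAt
  have hud : ContDiff ℝ 1 (deriv u) := (contDiff_succ_iff_deriv.mp hu').2.2
  have hu2 : ∀ t, HasDerivAt (deriv u) (deriv (deriv u) t) t :=
    fun t => ((hud.differentiable (by norm_num)) t).hasDerivAt
  have hcu : Continuous u := hu.continuous
  have hcu' : Continuous (deriv u) := hud.continuous
  -- the auxiliary function g = u c / v extended by deriv u at endpoints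
  set g : ℝ → ℝ := fun t => if t ∈ Ioo t₀ b then u t * c t / v t else deriv u t with hgdef
  have hgIoo : ∀ t ∈ Ioo t₀ b, g t = u t * c t / v t := by
    intro t ht; simp only [hgdef]; rw [if_pos ht]
  have hga : g t₀ = deriv u t₀ := by
    simp only [hgdef]; rw [if_neg (by simp)]
  have hgb : g b = deriv u b := by
    simp only [hgdef]; rw [if_neg (by simp)]
  -- continuity of g at interior points
  have hgint : ∀ t ∈ Ioo t₀ b, ContinuousAt g t := by
    intro t ht
    have hform : ContinuousAt (fun s => u s * c s / v s) t :=
      (hcu.continuousAt.mul hccont.continuousAt).div hvcont.continuousAt (hvpos t ht).ne'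
    refine hform.congr ?_
    filter_upwards [isOpen_Ioo.mem_nhds ht] with s hs
    exact (hgIoo s hs).symm
  -- continuity of g at the endpoints
  have hgca : ContinuousWithinAt g (Icc t₀ b) t₀ := by
    rw [← continuousWithinAt_diff_self]
    have hlim : Tendsto (fun s => u s * c s / v s) (nhdsWithin t₀ {t₀}ᶜ) (nhds (deriv u t₀)) :=
      aux_tendsto (hu1 t₀) hbc0 (hv t₀) hva (hca ▸ hω.ne') hccont.continuousAt
    have hle : nhdsWithin t₀ (Icc t₀ b \ {t₀}) ≤ nhdsWithin t₀ {t₀}ᶜ :=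
      nhdsWithin_mono t₀ (fun x hx => hx.2)
    have h5 : Tendsto (fun s => u s * c s / v s) (nhdsWithin t₀ (Icc t₀ b \ {t₀}))
        (nhds (deriv u t₀)) := hlim.mono_left hle
    rw [ContinuousWithinAt, hga]
    refine h5.congr' ?_
    have hIb : Iio b ∈ nhdsWithin t₀ (Icc t₀ b \ {t₀}) :=
      nhdsWithin_le_nhds (Iio_mem_nhds hab')
    filter_upwards [hIb, self_mem_nhdsWithin] with s hs1 hs2
    exact (hgIoo s ⟨lt_of_le_of_ne hs2.1.1 (Ne.symm hs2.2), hs1⟩).symm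
  have hgcb : ContinuousWithinAt g (Icc t₀ b) b := by
    rw [← continuousWithinAt_diff_self]
    have hlim : Tendsto (fun s => u s * c s / v s) (nhdsWithin b {b}ᶜ) (nhds (deriv u b)) :=
      aux_tendsto (hu1 b) hbcT (hv b) hvb (by rw [hcb]; exact neg_ne_zero.mpr hω.ne')
        hccont.continuousAt
    have hle : nhdsWithin b (Icc t₀ b \ {b}) ≤ nhdsWithin b {b}ᶜ :=
      nhdsWithin_mono b (fun x hx => hx.2)
    have h5 : Tendsto (fun s => u s * c s / v s) (nhdsWithin b (Icc t₀ b \ {b}))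
        (nhds (deriv u b)) := hlim.mono_left hle
    rw [ContinuousWithinAt, hgb]
    refine h5.congr' ?_
    have hIb : Ioi t₀ ∈ nhdsWithin b (Icc t₀ b \ {b}) :=
      nhdsWithin_le_nhds (Ioi_mem_nhds hab')
    filter_upwards [hIb, self_mem_nhdsWithin] with s hs1 hs2
    exact (hgIoo s ⟨hs1, lt_of_le_of_ne hs2.1.2 hs2.2⟩).symm
  -- continuity of g on the closed interval
  have hgc : ContinuousOn g (Icc t₀ b) := by
    intro t ht
    rcases eq_or_ne t t₀ with hta | hta
    · exact hta ▸ hgca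
    rcases eq_or_ne t b with htb | htb
    · exact htb ▸ hgcb
    · exact (hgint t ⟨lt_of_le_of_ne ht.1 (Ne.symm hta), lt_of_le_of_ne ht.2 htb⟩).continuousWithinAt
  -- The Picone function and its claimed derivative
  set P : ℝ → ℝ := fun t => deriv u t * u t - u t * g t with hPdef
  set D : ℝ → ℝ := fun t => (deriv u t - g t) ^ 2 + (ω ^ 2 - q t) * u t ^ 2 with hDdef
  have hPcont : ContinuousOn P (Icc t₀ b) :=
    ((hcu'.mul hcu).continuousOn).sub (hcu.continuousOn.mul hgc)
  have hPD : ∀ t ∈ Ioo t₀ b, HasDerivAt P (D t) t := by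
    intro t ht
    have hvt : v t ≠ 0 := (hvpos t ht).ne'
    have hode' : deriv (deriv u) t = -(q t * u t) := by
      have := hode t (Ioo_subset_Icc_self ht); linarith
    have h1 : HasDerivAt (fun s => deriv u s * u s)
        (deriv (deriv u) t * u t + deriv u t * deriv u t) t := (hu2 t).mul (hu1 t)
    have h2 : HasDerivAt (fun s => u s * u s * c s)
        ((deriv u t * u t + u t * deriv u t) * c t + u t * u t * (-(ω ^ 2) * v t)) t :=
      ((hu1 t).mul (hu1 t)).mul (hc t)
    have h3 : HasDerivAt (fun s => u s * u s * c s / v s)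
        ((((deriv u t * u t + u t * deriv u t) * c t + u t * u t * (-(ω ^ 2) * v t)) * v t -
          u t * u t * c t * c t) / v t ^ 2) t := h2.div (hv t) hvt
    have h4 := h1.sub h3
    have heq : P =ᶠ[nhds t] fun s => deriv u s * u s - u s * u s * c s / v s := by
      filter_upwards [isOpen_Ioo.mem_nhds ht] with s hs
      rw [hPdef]
      simp only [hgIoo s hs]
      ring
    refine (heq.hasDerivAt_iff.mpr ?_)
    convert h4 using 1
    · rfl
    rw [hDdef]
    simp only [hgIoo t ht, hode']
    field_simp
    ring
  -- integrability
  have hf1cont : ContinuousOn (fun t => (deriv u t - g t) ^ 2) (Icc t₀ b) :=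
    (hcu'.continuousOn.sub hgc).pow 2
  have hf1int : IntegrableOn (fun t => (deriv u t - g t) ^ 2) (Icc t₀ b) volume :=
    hf1cont.integrableOn_compact isCompact_Icc
  have hqu2 : IntegrableOn (fun t => q t * u t ^ 2) (Icc t₀ b) volume :=
    hint.mul_continuousOn ((hcu.pow 2).continuousOn) isCompact_Icc
  have hf2int : IntegrableOn (fun t => (ω ^ 2 - q t) * u t ^ 2) (Icc t₀ b) volume := by
    have h5 : IntegrableOn (fun t => ω ^ 2 * u t ^ 2) (Icc t₀ b) volume :=
      ((continuous_const.mul (hcu.pow 2)).continuousOn).integrableOn_compact isCompact_Icc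
    have h6 := h5.sub hqu2
    have : (fun t => (ω ^ 2 - q t) * u t ^ 2)
        = fun t => ω ^ 2 * u t ^ 2 - q t * u t ^ 2 := by funext t; ring
    rw [this]; exact h6
  have hDint : IntegrableOn D (Icc t₀ b) volume := by
    rw [hDdef]; exact hf1int.add hf2int
  have hDii : IntervalIntegrable D volume t₀ b := by
    refine IntegrableOn.intervalIntegrable ?_
    rwa [uIcc_of_le hab]
  -- FTC
  have hFTC : ∫ t in t₀..b, D t = P b - P t₀ :=
    intervalIntegral.integral_eq_sub_of_hasDeriv_right_of_le hab hPcont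
      (fun t ht => (hPD t ht).hasDerivWithinAt) hDii
  have hPa : P t₀ = 0 := by rw [hPdef]; simp [hbc0]
  have hPb : P b = 0 := by rw [hPdef]; simp [hbcT]
  have hIcc0 : ∫ t in Icc t₀ b, D t = 0 := by
    rw [integral_Icc_eq_integral_Ioc, ← intervalIntegral.integral_of_le hab, hFTC, hPa, hPb,
      sub_zero]
  -- split the integral
  have hsplit : ∫ t in Icc t₀ b, D t = (∫ t in Icc t₀ b, (deriv u t - g t) ^ 2)
      + ∫ t in Icc t₀ b, (ω ^ 2 - q t) * u t ^ 2 := by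
    rw [hDdef]; exact integral_add hf1int hf2int
  have h1nn : 0 ≤ ∫ t in Icc t₀ b, (deriv u t - g t) ^ 2 :=
    integral_nonneg fun t => sq_nonneg _
  have h2nnae : ∀ᵐ t ∂(volume.restrict (Icc t₀ b)), 0 ≤ (ω ^ 2 - q t) * u t ^ 2 := by
    filter_upwards [hub] with t ht
    have h7 : 0 ≤ ω ^ 2 - q t := by rw [hω2]; linarith
    exact mul_nonneg h7 (sq_nonneg _)
  have h2nn : 0 ≤ ∫ t in Icc t₀ b, (ω ^ 2 - q t) * u t ^ 2 := integral_nonneg_of_ae h2nnae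
  have h1z : ∫ t in Icc t₀ b, (deriv u t - g t) ^ 2 = 0 := by
    rw [hsplit] at hIcc0; linarith
  have h2z : ∫ t in Icc t₀ b, (ω ^ 2 - q t) * u t ^ 2 = 0 := by
    rw [hsplit] at hIcc0; linarith
  -- first consequence: deriv u = g on the open interval
  have hf1ae : ∀ᵐ t ∂(volume.restrict (Icc t₀ b)), (deriv u t - g t) ^ 2 = 0 := by
    have := (integral_eq_zero_iff_of_nonneg_ae
      (Eventually.of_forall fun t => sq_nonneg (deriv u t - g t)) hf1int).mp h1z
    filter_upwards [this] with t ht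
    simpa using ht
  have hgz : ∀ t ∈ Ioo t₀ b, deriv u t = g t := by
    intro t ht
    have hct : ContinuousAt (fun s => (deriv u s - g s) ^ 2) t :=
      (hcu'.continuousAt.sub (hgint t ht)).pow 2
    have h8 := aux_zero hf1ae ht hct
    have := pow_eq_zero_iff (n := 2) (by norm_num) |>.mp h8
    linarith
  -- hence u / v is constant on the open interval
  have hratio : ∀ x ∈ Ioo t₀ b, ∀ y ∈ Ioo t₀ b, x ≤ y → u y / v y = u x / v x := by
    intro x hx y hy hxy
    have hIccsub : Icc x y ⊆ Ioo t₀ b := fun z hz =>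
      ⟨lt_of_lt_of_le hx.1 hz.1, lt_of_le_of_lt hz.2 hy.2⟩
    have hcont : ContinuousOn (fun s => u s / v s) (Icc x y) :=
      ContinuousOn.div hcu.continuousOn hvcont.continuousOn
        (fun z hz => (hvpos z (hIccsub hz)).ne')
    have hderiv0 : ∀ z ∈ Ico x y, HasDerivWithinAt (fun s => u s / v s) 0 (Ici z) z := by
      intro z hz
      have hzI : z ∈ Ioo t₀ b := hIccsub ⟨hz.1, hz.2.le⟩
      have hvz : v z ≠ 0 := (hvpos z hzI).ne'
      have hd := (hu1 z).div (hv z) hvz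
      have h9 : (deriv u z * v z - u z * c z) / v z ^ 2 = 0 := by
        rw [hgz z hzI, hgIoo z hzI]; field_simp; ring
      rw [h9] at hd
      exact hd.hasDerivWithinAt
    exact constant_of_has_deriv_right_zero hcont hderiv0 y ⟨hxy, le_refl y⟩
  have hm : t₀ + T / 2 ∈ Ioo t₀ b := by
    constructor
    · linarith
    · rw [hbdef]; linarith
  set m := t₀ + T / 2 with hmdef
  have hκ : ∀ t ∈ Ioo t₀ b, u t = u m / v m * v t := by
    intro t ht
    have hvt : v t ≠ 0 := (hvpos t ht).ne'
    have h10 : u m / v m = u t / v t := by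
      rcases le_total t m with h | h
      · exact hratio t ht m hm h
      · exact (hratio m hm t ht h).symm
    rw [h10, div_mul_cancel₀ _ hvt]
  -- second consequence: the constant is zero
  have hf2ae : ∀ᵐ t ∂(volume.restrict (Icc t₀ b)), (ω ^ 2 - q t) * u t ^ 2 = 0 := by
    have := (integral_eq_zero_iff_of_nonneg_ae h2nnae hf2int).mp h2z
    filter_upwards [this] with t ht
    simpa using ht
  have hae2 : ∀ᵐ t ∂volume, t ∈ Icc t₀ b → (ω ^ 2 - q t) * u t ^ 2 = 0 :=
    (ae_restrict_iff' measurableSet_Icc).mp hf2ae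
  have hN : volume {t | ¬ (t ∈ Icc t₀ b → (ω ^ 2 - q t) * u t ^ 2 = 0)} = 0 := by
    rw [ae_iff] at hae2; exact hae2
  have hSd : volume ({t | t ∈ Icc t₀ b ∧ q t < π ^ 2 / T ^ 2}
      \ ({t | ¬ (t ∈ Icc t₀ b → (ω ^ 2 - q t) * u t ^ 2 = 0)} ∪ {t₀} ∪ {b}))
      = volume {t | t ∈ Icc t₀ b ∧ q t < π ^ 2 / T ^ 2} := by
    refine measure_diff_null ?_
    refine measure_union_null (measure_union_null hN (measure_singleton _))
      (measure_singleton _)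
  obtain ⟨t1, ht1⟩ : Set.Nonempty ({t | t ∈ Icc t₀ b ∧ q t < π ^ 2 / T ^ 2}
      \ ({t | ¬ (t ∈ Icc t₀ b → (ω ^ 2 - q t) * u t ^ 2 = 0)} ∪ {t₀} ∪ {b})) := by
    refine nonempty_of_measure_ne_zero (μ := volume) ?_
    rw [hSd]
    exact hstrict.ne'
  obtain ⟨⟨ht1I, ht1q⟩, ht1n⟩ := ht1
  have ht1n' : t1 ∉ ({t | ¬ (t ∈ Icc t₀ b → (ω ^ 2 - q t) * u t ^ 2 = 0)} : Set ℝ) ∧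
      t1 ≠ t₀ ∧ t1 ≠ b := by
    refine ⟨fun h => ht1n (Or.inl (Or.inl h)), fun h => ht1n (Or.inl (Or.inr h)),
      fun h => ht1n (Or.inr h)⟩
  have ht1z : (ω ^ 2 - q t1) * u t1 ^ 2 = 0 := by
    have := ht1n'.1
    simp only [mem_setOf_eq, not_not] at this
    exact this ht1I
  have ht1Ioo : t1 ∈ Ioo t₀ b :=
    ⟨lt_of_le_of_ne ht1I.1 (Ne.symm ht1n'.2.1), lt_of_le_of_ne ht1I.2 ht1n'.2.2⟩
  have ht1u : u t1 = 0 := by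
    have hpos : 0 < ω ^ 2 - q t1 := by rw [hω2]; linarith
    have := mul_eq_zero.mp ht1z
    rcases this with h | h
    · linarith
    · exact pow_eq_zero_iff (n := 2) (by norm_num) |>.mp h
  have hκ0 : u m / v m = 0 := by
    have h11 := hκ t1 ht1Ioo
    rw [ht1u] at h11
    have hvt1 : v t1 ≠ 0 := (hvpos t1 ht1Ioo).ne'
    rcases mul_eq_zero.mp h11.symm with h | h
    · exact h
    · exact absurd h hvt1
  -- conclusion
  intro t ht
  rcases eq_or_ne t t₀ with rfl | hta
  · exact hbc0
  rcases eq_or_ne t b with h | htb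
  · rw [h]; exact hbcT
  · have htIoo : t ∈ Ioo t₀ b :=
      ⟨lt_of_le_of_ne ht.1 (Ne.symm hta), lt_of_le_of_ne ht.2 htb⟩
    rw [hκ t htIoo, hκ0, zero_mul]
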